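/- Let V be a finite-dimensional real inner product space, Ω ⊆ V a nonempty proper open convex cone, and H ⊆ V a linear subspace with H ∩ closure(Ω) = {0}. Then (closure(Ω) + H) ∩ (−(closure(Ω) + H)) = H. -/

import Mathlib

open Set Filter
open scoped Pointwise RealInnerProductSpace

/-- A subset `C` of a real vector space is a cone if `t • x ∈ C` for all `x ∈ C`, `t > 0`. -/
def IsCone {V : Type*} [AddCommGroup V] [Module ℝ V] (C : Set V) : Prop :=
  ∀ x ∈ C, ∀ t : ℝ, 0 < t → t • x ∈ C

/-- The open dual cone of an open cone `Ω` with respect to the inner product. -/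
def openDualCone {V : Type*} [NormedAddCommGroup V] [InnerProductSpace ℝ V] (Ω : Set V) :
    Set V :=
  {v | ∀ ω ∈ closure Ω, ω ≠ 0 → 0 < ⟪v, ω⟫}

theorem stmt_14 {V : Type*} [NormedAddCommGroup V] [InnerProductSpace ℝ V]
    [FiniteDimensional ℝ V]
    (Ω : Set V) (hne : Ω.Nonempty) (hopen : IsOpen Ω) (hconv : Convex ℝ Ω)
    (hcone : IsCone Ω) (hproper : closure Ω ∩ -closure Ω = {0})
    (H : Submodule ℝ V) (hH : (H : Set V) ∩ closure Ω = {0}) :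
    (closure Ω + (H : Set V)) ∩ -(closure Ω + (H : Set V)) = (H : Set V) := by
  -- 0 belongs to closure Ω
  obtain ⟨x, hx⟩ := hne
  have hzero : (0 : V) ∈ closure Ω := by
    have htend : Filter.Tendsto (fun n : ℕ => (1 / (n + 1) : ℝ) • x) Filter.atTop (nhds 0) := by
      have := (tendsto_one_div_add_atTop_nhds_zero_nat (𝕜 := ℝ)).smul_const x
      simpa using this
    refine mem_closure_of_tendsto htend ?_
    filter_upwards with n
    exact hcone x hx _ (by positivity)
  -- closure Ω is a cone
  have hcl_cone : ∀ y ∈ closure Ω, ∀ t : ℝ, 0 < t → t • y ∈ closure Ω := by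
    intro y hy t ht
    exact Set.MapsTo.closure (fun w hw => hcone w hw t ht) (continuous_const_smul t) hy
  -- closure Ω is closed under addition
  have hadd : ∀ a ∈ closure Ω, ∀ b ∈ closure Ω, a + b ∈ closure Ω := by
    intro a ha b hb
    have hc : Convex ℝ (closure Ω) := hconv.closure
    have hmid : (1/2 : ℝ) • a + (1/2 : ℝ) • b ∈ closure Ω :=
      hc ha hb (by norm_num) (by norm_num) (by norm_num)
    have := hcl_cone _ hmid 2 (by norm_num)
    simpa [smul_add, smul_smul] using this
  apply Set.Subset.antisymm
  · rintro v ⟨⟨a, ha, h1, hh1, rfl⟩, hv2⟩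
    rw [Set.mem_neg] at hv2
    obtain ⟨b, hb, h2, hh2, heq⟩ := hv2
    -- -(a+h1) = b + h2, so a + b = -(h1+h2) ∈ H
    have hab : a + b = -(h1 + h2) := by
      have h : b + h2 = -(a + h1) := heq
      rw [eq_neg_iff_add_eq_zero] at h ⊢
      calc a + b + (h1 + h2) = b + h2 + (a + h1) := by abel
        _ = 0 := h
    have habH : a + b ∈ (H : Set V) := by
      rw [hab]
      exact H.neg_mem (H.add_mem hh1 hh2)
    have habC : a + b ∈ closure Ω := hadd a ha b hb
    have hab0 : a + b = 0 := by
      have : a + b ∈ ((H : Set V) ∩ closure Ω) := ⟨habH, habC⟩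
      rw [hH] at this; exact this
    have ha0 : a = 0 := by
      have hbneg : a ∈ -closure Ω := by
        rw [Set.mem_neg, neg_eq_of_add_eq_zero_right hab0]
        exact hb
      have : a ∈ closure Ω ∩ -closure Ω := ⟨ha, hbneg⟩
      rw [hproper] at this; exact this
    show a + h1 ∈ (H : Set V)
    rw [ha0, zero_add]; exact hh1
  · intro h hh
    refine ⟨⟨0, hzero, h, hh, by simp⟩, ?_⟩
    rw [Set.mem_neg]
    exact ⟨0, hzero, -h, H.neg_mem hh, by simp⟩
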